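/- Let G = (V, E) be a connected multigraph, f a divisor on G, and M a positive integer with M > dist_rec_G(f) + max{0, max_{v ∈ V}(f(v) − d_G(v))}; let G' and f' be as in the apex construction. Then dist_rec_G(f) ≥ dist_nonhalt_{G'}(f'). -/

import Mathlib

variable {V : Type*} [Fintype V] [DecidableEq V]

/-- The degree of vertex `v` in the multigraph with edge-multiplicity function `m`. -/
def mgDeg (m : V → V → ℕ) (v : V) : ℕ := ∑ u, m v u

/-- The divisor obtained from `f` by firing vertex `v`. -/
def mgFire (m : V → V → ℕ) (f : V → ℤ) (v : V) : V → ℤ :=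
  fun u => if u = v then f v - mgDeg m v else f u + m v u

/-- The divisor obtained from `f` by firing the vertices of `L` in order. -/
def mgPlay (m : V → V → ℕ) (f : V → ℤ) (L : List V) : V → ℤ :=
  L.foldl (mgFire m) f

/-- `L` is a legal game from `f`: each fired vertex is active when fired. -/
def mgLegal (m : V → V → ℕ) : (V → ℤ) → List V → Prop
  | _, [] => True
  | f, v :: L => ((mgDeg m v : ℤ) ≤ f v) ∧ mgLegal m (mgFire m f v) L

/-- A divisor is stable if no vertex is active. -/
def mgStable (m : V → V → ℕ) (f : V → ℤ) : Prop := ∀ v, f v < (mgDeg m v : ℤ)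

/-- A divisor is halting if some legal game from it ends at a stable divisor. -/
def mgHalting (m : V → V → ℕ) (f : V → ℤ) : Prop :=
  ∃ L : List V, mgLegal m f L ∧ mgStable m (mgPlay m f L)

/-- A divisor is recurrent if some non-empty legal game from it leads back to it. -/
def mgRecurrent (m : V → V → ℕ) (f : V → ℤ) : Prop :=
  ∃ L : List V, L ≠ [] ∧ mgLegal m f L ∧ mgPlay m f L = f

/-- A divisor is effective if it is nonnegative everywhere. -/
def mgEffective (f : V → ℤ) : Prop := ∀ v, 0 ≤ f v

/-- The degree of a divisor. -/
def mgDegDiv (f : V → ℤ) : ℤ := ∑ v, f v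

/-- Distance of a divisor from a recurrent state. -/
noncomputable def mgDistRec (m : V → V → ℕ) (f : V → ℤ) : ℕ :=
  sInf {n : ℕ | ∃ g : V → ℤ, mgEffective g ∧ mgDegDiv g = (n : ℤ) ∧ mgRecurrent m (f + g)}

/-- Distance of a divisor from a non-halting state. -/
noncomputable def mgDistNonhalt (m : V → V → ℕ) (f : V → ℤ) : ℕ :=
  sInf {n : ℕ | ∃ g : V → ℤ, mgEffective g ∧ mgDegDiv g = (n : ℤ) ∧ ¬ mgHalting m (f + g)}

/-- A multigraph is connected if any two vertices are joined by a path of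
positive-multiplicity edges. -/
def mgConnected (m : V → V → ℕ) : Prop :=
  ∀ u v : V, Relation.ReflTransGen (fun a b => 0 < m a b) u v

/-- `f` and `g` are linearly equivalent: `f` can be transformed to `g` by firings. -/
def mgLinEquiv (m : V → V → ℕ) (f g : V → ℤ) : Prop :=
  ∃ L : List V, mgPlay m f L = g

/-- A divisor is winnable if it is linearly equivalent to an effective divisor. -/
def mgWinnable (m : V → V → ℕ) (f : V → ℤ) : Prop :=
  ∃ g : V → ℤ, mgEffective g ∧ mgLinEquiv m f g

/-- The rank of a divisor. -/
noncomputable def mgRank (m : V → V → ℕ) (f : V → ℤ) : ℤ :=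
  ((sInf {n : ℕ | ∃ g : V → ℤ, mgEffective g ∧ mgDegDiv g = (n : ℤ) ∧
    ¬ mgWinnable m (f - g)} : ℕ) : ℤ) - 1

/-- Edge multiplicities of the apex construction: the edges of `G` (on the `some`
vertices) together with `M` parallel edges between the new vertex `none` and each
original vertex. -/
def apexM (m : V → V → ℕ) (M : ℕ) : Option V → Option V → ℕ
  | some u, some v => m u v
  | some _, none => M
  | none, some _ => M
  | none, none => 0

/-- The divisor `f\'` of the apex construction: `f\'(v) = f(v) + M` on original
vertices and `f\'(v_new) = 0`. -/
def apexF (f : V → ℤ) (M : ℕ) : Option V → ℤ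
  | some v => f v + M
  | none => 0

set_option linter.unusedSectionVars false

section A
variable {m : V → V → ℕ} {f : V → ℤ}

lemma mgPlay_nil : mgPlay m f [] = f := rfl
lemma mgPlay_cons (v : V) (L : List V) :
    mgPlay m f (v :: L) = mgPlay m (mgFire m f v) L := rfl
lemma mgPlay_append (A B : List V) :
    mgPlay m f (A ++ B) = mgPlay m (mgPlay m f A) B := List.foldl_append

lemma mgLegal_nil : mgLegal m f [] := trivial
lemma mgLegal_cons {v : V} {L : List V} :
    mgLegal m f (v :: L) ↔ ((mgDeg m v : ℤ) ≤ f v) ∧ mgLegal m (mgFire m f v) L := Iff.rfl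

lemma mgLegal_append {A B : List V} (h : mgLegal m f (A ++ B)) :
    mgLegal m f A ∧ mgLegal m (mgPlay m f A) B := by
  induction A generalizing f with
  | nil => exact ⟨trivial, h⟩
  | cons a T ih =>
    rw [List.cons_append, mgLegal_cons] at h
    obtain ⟨h1, h2⟩ := h
    obtain ⟨h3, h4⟩ := ih h2
    exact ⟨⟨h1, h3⟩, h4⟩

lemma mgLegal_append_intro {A B : List V} (h1 : mgLegal m f A)
    (h2 : mgLegal m (mgPlay m f A) B) : mgLegal m f (A ++ B) := by
  induction A generalizing f with
  | nil => exact h2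
  | cons a T ih => exact ⟨h1.1, ih h1.2 h2⟩

lemma count_pos_of_mem' {α : Type*} [DecidableEq α] {a : α} {l : List α} (h : a ∈ l) :
    0 < l.count a := List.count_pos_iff.2 h

omit [DecidableEq V] in
lemma sum_col (hs : ∀ u v, m u v = m v u) (v : V) :
    ∑ u, (m u v : ℤ) = (mgDeg m v : ℤ) := by
  rw [mgDeg]; push_cast; exact Finset.sum_congr rfl fun u _ => by rw [hs]

lemma mgPlay_val (hs : ∀ u v, m u v = m v u) (hl : ∀ v, m v v = 0) :
    ∀ (L : List V) (f : V → ℤ) (v : V),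
    mgPlay m f L v = f v + ∑ u, (m u v : ℤ) * L.count u - (mgDeg m v : ℤ) * L.count v := by
  intro L
  induction L with
  | nil => intro f v; simp [mgPlay]
  | cons a T ih =>
    intro f v
    have hsum : ∑ u, (m u v : ℤ) * ((a :: T).count u) =
        (∑ u, (m u v : ℤ) * T.count u) + m a v := by
      have : ∀ u, (m u v : ℤ) * ((a :: T).count u) =
          (m u v : ℤ) * T.count u + (if u = a then (m u v : ℤ) else 0) := by
        intro u
        by_cases h : u = a
        · subst h; rw [List.count_cons_self]; push_cast; simp; ring
        · rw [List.count_cons_of_ne (Ne.symm h)]; simp [h]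
      rw [Finset.sum_congr rfl fun u _ => this u, Finset.sum_add_distrib,
        Finset.sum_ite_eq' Finset.univ a (fun u => (m u v : ℤ))]
      simp
    rw [mgPlay_cons, ih, hsum]
    by_cases hva : v = a
    · subst hva
      have : (mgFire m f v) v = f v - mgDeg m v := by simp [mgFire]
      rw [this, List.count_cons_self]
      push_cast
      rw [hl v]
      push_cast
      ring
    · have : (mgFire m f a) v = f v + m a v := by simp [mgFire, hva]
      rw [this, List.count_cons_of_ne (Ne.symm hva)]
      ring
end A

section B
variable {m : V → V → ℕ} {f : V → ℤ}

lemma count_pos_of_cycle (hs : ∀ u v, m u v = m v u) (hl : ∀ v, m v v = 0)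
    (hconn : mgConnected m) {L : List V} (hne : L ≠ []) (hcyc : mgPlay m f L = f) :
    ∀ v, 0 < L.count v := by
  have key : ∀ v, ∑ u, (m u v : ℤ) * L.count u = (mgDeg m v : ℤ) * L.count v := by
    intro v
    have h := congrFun hcyc v
    rw [mgPlay_val hs hl] at h
    linarith
  have hV : Nonempty V := ⟨L.head hne⟩
  obtain ⟨v0, -, hv0⟩ := Finset.exists_min_image Finset.univ (fun v => L.count v)
    ⟨Classical.arbitrary V, Finset.mem_univ _⟩
  have hstep : ∀ a b, L.count a = L.count v0 → 0 < m a b → L.count b = L.count v0 := by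
    intro a b ha hab
    have h1 : ∑ u, (m u a : ℤ) * ((L.count u : ℤ) - L.count v0) = 0 := by
      have h2 : ∑ u, (m u a : ℤ) * ((L.count u : ℤ) - L.count v0)
          = (∑ u, (m u a : ℤ) * L.count u) - (∑ u, (m u a : ℤ)) * (L.count v0 : ℤ) := by
        rw [Finset.sum_mul, ← Finset.sum_sub_distrib]
        exact Finset.sum_congr rfl fun u _ => by ring
      rw [h2, key a, sum_col hs, ha]
      ring
    have h3 : ∀ u ∈ Finset.univ, (0:ℤ) ≤ (m u a : ℤ) * ((L.count u : ℤ) - L.count v0) := by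
      intro u _
      have := hv0 u (Finset.mem_univ u)
      have h6 : (L.count v0 : ℤ) ≤ L.count u := by exact_mod_cast this
      have h7 : (0:ℤ) ≤ (m u a : ℤ) := by positivity
      nlinarith
    have h4 := (Finset.sum_eq_zero_iff_of_nonneg h3).1 h1 b (Finset.mem_univ b)
    have hba : 0 < m b a := by rw [hs]; exact hab
    have h5 : (L.count b : ℤ) - L.count v0 = 0 := by
      rcases mul_eq_zero.1 h4 with h | h
      · exfalso; have : (m b a : ℤ) ≠ 0 := by exact_mod_cast hba.ne'
        exact this h
      · exact h
    exact_mod_cast sub_eq_zero.1 h5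
  have hall : ∀ v, L.count v = L.count v0 := by
    intro v
    induction hconn v0 v with
    | refl => rfl
    | tail _ hab ih => exact hstep _ _ ih hab
  intro v
  rw [hall v]
  have hw : L.head hne ∈ L := List.head_mem hne
  have : 0 < L.count (L.head hne) := List.count_pos_iff.2 hw
  rw [hall (L.head hne)] at this
  exact this
end B

section C
variable {m : V → V → ℕ} {f : V → ℤ}

/-- decomposition at the last occurrence -/
lemma exists_lastocc {v : V} {L : List V} (h : v ∈ L) :
    ∃ A B : List V, L = A ++ v :: B ∧ v ∉ B := by
  induction L with
  | nil => cases h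
  | cons a T ih =>
    by_cases hv : v ∈ T
    · obtain ⟨A, B, h1, h2⟩ := ih hv
      exact ⟨a :: A, B, by rw [h1]; rfl, h2⟩
    · have hva : v = a := by
        rcases List.mem_cons.1 h with h | h
        · exact h
        · exact absurd h hv
      exact ⟨[], T, by simp [hva], hv⟩

/-- decomposition at the first occurrence -/
lemma exists_firstocc {v : V} {L : List V} (h : v ∈ L) :
    ∃ A B : List V, L = A ++ v :: B ∧ v ∉ A := by
  induction L with
  | nil => cases h
  | cons a T ih =>
    by_cases hva : v = a
    · exact ⟨[], T, by simp [hva], List.not_mem_nil⟩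
    · have hv : v ∈ T := by
        rcases List.mem_cons.1 h with h | h
        · exact absurd h hva
        · exact h
      obtain ⟨A, B, h1, h2⟩ := ih hv
      exact ⟨a :: A, B, by rw [h1]; rfl, by simp [hva, h2]⟩

/-- elements after `v` in the dedup list occur after the last occurrence of `v`. -/
lemma dedup_lastocc : ∀ (L X Y : List V) (v u : V), L.dedup = X ++ v :: Y → u ∈ Y →
    ∀ A B : List V, L = A ++ v :: B → v ∉ B → u ∈ B := by
  intro L
  induction L with
  | nil =>
    intro X Y v u h hu A B hAB hvB
    exact absurd hAB.symm (List.append_ne_nil_of_right_ne_nil _ (List.cons_ne_nil _ _))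
  | cons a T ih =>
    intro X Y v u h hu A B hAB hvB
    rcases A with _ | ⟨a1, A1⟩
    · simp only [List.nil_append, List.cons.injEq] at hAB
      rw [← hAB.2] at hvB ⊢
      rw [← hAB.1] at h hvB
      have hd : (a :: T).dedup = a :: T.dedup := List.dedup_cons_of_notMem hvB
      rw [hd] at h
      rcases X with _ | ⟨x, X1⟩
      · simp only [List.nil_append, List.cons.injEq] at h
        rw [← h.2] at hu
        exact List.mem_dedup.1 hu
      · simp only [List.cons_append, List.cons.injEq] at h
        exfalso
        have hmem : a ∈ T.dedup := by
          rw [h.2]; exact List.mem_append_right _ (List.mem_cons_self)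
        exact hvB (List.mem_dedup.1 hmem)
    · simp only [List.cons_append, List.cons.injEq] at hAB
      obtain ⟨h1, hT⟩ := hAB
      subst h1
      by_cases ha : a ∈ T
      · rw [List.dedup_cons_of_mem ha] at h
        exact ih X Y v u h hu A1 B hT hvB
      · rw [List.dedup_cons_of_notMem ha] at h
        rcases X with _ | ⟨x, X1⟩
        · simp only [List.nil_append, List.cons.injEq] at h
          exfalso
          rw [← h.1] at hT
          exact ha (by rw [hT]; exact List.mem_append_right _ (List.mem_cons_self))
        · simp only [List.cons_append, List.cons.injEq] at h
          exact ih X1 Y v u h.2 hu A1 B hT hvB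

/-- chips at `v` at the end of a cycle dominate edges from vertices fired after
the last firing of `v`. -/
lemma cycle_bound (hs : ∀ u v, m u v = m v u) (hl : ∀ v, m v v = 0)
    {A B : List V} {v : V} (hleg : mgLegal m f (A ++ v :: B))
    (hcyc : mgPlay m f (A ++ v :: B) = f) (hvB : v ∉ B) :
    ∑ u, (m u v : ℤ) * B.count u ≤ f v := by
  obtain ⟨-, hleg2⟩ := mgLegal_append hleg
  obtain ⟨hact, -⟩ := hleg2
  have h1 : mgPlay m f (A ++ v :: B) v
      = mgFire m (mgPlay m f A) v v + ∑ u, (m u v : ℤ) * B.count u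
        - (mgDeg m v : ℤ) * B.count v := by
    rw [mgPlay_append, mgPlay_cons, mgPlay_val hs hl]
  have h2 : B.count v = 0 := List.count_eq_zero.2 hvB
  have h3 : mgFire m (mgPlay m f A) v v = mgPlay m f A v - mgDeg m v := by simp [mgFire]
  have h4 : (0:ℤ) ≤ mgPlay m f A v - mgDeg m v := by linarith
  rw [hcyc] at h1
  rw [h3, h2] at h1
  push_cast at h1
  linarith

/-- legality from prefix conditions, for nodup lists. -/
lemma legal_of_cond : ∀ (W : List V) (f : V → ℤ), W.Nodup →
    (∀ (P : List V) (v : V) (Q : List V), W = P ++ v :: Q →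
      (mgDeg m v : ℤ) - (P.map (fun u => (m u v : ℤ))).sum ≤ f v) →
    mgLegal m f W := by
  intro W
  induction W with
  | nil => intro f _ _; trivial
  | cons v T ih =>
    intro f hnd hcond
    have h0 := hcond [] v T rfl
    simp at h0
    refine ⟨h0, ih (mgFire m f v) (List.nodup_cons.1 hnd).2 ?_⟩
    intro P u Q hPQ
    have hvT : v ∉ T := (List.nodup_cons.1 hnd).1
    have huv : u ≠ v := by
      intro h; subst h
      exact hvT (by rw [hPQ]; exact List.mem_append_right _ (List.mem_cons_self))
    have hfire : mgFire m f v u = f u + m v u := by simp [mgFire, huv]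
    have := hcond (v :: P) u Q (by rw [hPQ]; rfl)
    rw [List.map_cons, List.sum_cons] at this
    rw [hfire]
    linarith

end C

section D
variable {m : V → V → ℕ} {f : V → ℤ}

lemma fire_comm (a b : V) : mgFire m (mgFire m f a) b = mgFire m (mgFire m f b) a := by
  by_cases hab : a = b
  · rw [hab]
  funext u
  simp only [mgFire]
  by_cases hua : u = a
  · subst hua
    rw [if_neg hab, if_pos rfl, if_pos rfl, if_neg hab]
    push_cast; ring
  · by_cases hub : u = b
    · subst hub
      rw [if_pos rfl, if_neg (Ne.symm hab), if_neg (Ne.symm hab), if_pos rfl]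
      push_cast; ring
    · rw [if_neg hub, if_neg hua, if_neg hua, if_neg hub]
      push_cast; ring

lemma legal_extract (v : V) : ∀ (A : List V) (f : V → ℤ) (B : List V), v ∉ A →
    ((mgDeg m v : ℤ) ≤ f v) → mgLegal m f (A ++ v :: B) →
    mgLegal m (mgFire m f v) (A ++ B) := by
  intro A
  induction A with
  | nil => intro f B _ _ h; exact h.2
  | cons a T ih =>
    intro f B hvA hact h
    obtain ⟨h1, h2⟩ := h
    have hva : v ≠ a := by intro hh; exact hvA (by rw [hh]; exact List.mem_cons_self)
    refine ⟨?_, ?_⟩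
    · have : mgFire m f v a = f a + m v a := by simp [mgFire, Ne.symm hva]
      rw [this]; have : (0:ℤ) ≤ m v a := by positivity
      linarith
    · rw [fire_comm]
      refine ih (mgFire m f a) B (fun hh => hvA (List.mem_cons_of_mem _ hh)) ?_ h2
      have : mgFire m f a v = f v + m a v := by simp [mgFire, hva]
      rw [this]; have : (0:ℤ) ≤ m a v := by positivity
      linarith

lemma play_eq_of_count_eq (hs : ∀ u v, m u v = m v u) (hl : ∀ v, m v v = 0)
    {L L' : List V} (h : ∀ v, L.count v = L'.count v) :
    mgPlay m f L = mgPlay m f L' := by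
  funext v
  rw [mgPlay_val hs hl, mgPlay_val hs hl, h v]
  congr 1
  congr 1
  exact Finset.sum_congr rfl fun u _ => by rw [h u]

/-- the abelian bounding lemma: any legal game is dominated by a stabilizing one. -/
lemma halting_count_bound (hs : ∀ u v, m u v = m v u) (hl : ∀ v, m v v = 0) :
    ∀ (L' : List V) (f : V → ℤ) (L : List V), mgLegal m f L' → mgLegal m f L →
    (∀ w, mgPlay m f L w < (mgDeg m w : ℤ)) → ∀ v, L'.count v ≤ L.count v := by
  intro L'
  induction L' with
  | nil => intro f L _ _ _ v; simp
  | cons v T ih =>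
    intro f L hL' hL hstab u
    obtain ⟨hact, hT⟩ := hL'
    -- v must occur in L
    have hvL : v ∈ L := by
      by_contra hv
      have hc : L.count v = 0 := List.count_eq_zero.2 hv
      have := hstab v
      rw [mgPlay_val hs hl, hc] at this
      have hnn : (0:ℤ) ≤ ∑ u, (m u v : ℤ) * L.count u := by positivity
      push_cast at this
      linarith
    obtain ⟨A, B, hAB, hvA⟩ := exists_firstocc hvL
    subst hAB
    have hlegAB : mgLegal m (mgFire m f v) (A ++ B) := legal_extract v A f B hvA hact hL
    have hplayeq : mgPlay m (mgFire m f v) (A ++ B) = mgPlay m f (A ++ v :: B) := by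
      have h1 : mgPlay m (mgFire m f v) (A ++ B) = mgPlay m f (v :: (A ++ B)) := rfl
      rw [h1]
      refine play_eq_of_count_eq hs hl fun w => ?_
      rw [List.count_cons, List.count_append, List.count_append, List.count_cons]
      ring
    have hstab2 : ∀ w, mgPlay m (mgFire m f v) (A ++ B) w < (mgDeg m w : ℤ) := by
      rw [hplayeq]; exact hstab
    have hcount := ih (mgFire m f v) (A ++ B) hT hlegAB hstab2 u
    by_cases huv : u = v <;>
      simp [List.count_cons, List.count_append, huv] at hcount ⊢ <;> omega

lemma legal_pow {C : List V} (hC : mgLegal m f C) (hcyc : mgPlay m f C = f) :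
    ∀ k : ℕ, ∃ Lk : List V, mgLegal m f Lk ∧ ∀ v, Lk.count v = k * C.count v := by
  intro k
  induction k with
  | zero => exact ⟨[], trivial, by simp⟩
  | succ k ihk =>
    obtain ⟨Lk, h1, h2⟩ := ihk
    refine ⟨C ++ Lk, mgLegal_append_intro hC (by rw [hcyc]; exact h1), fun v => ?_⟩
    rw [List.count_append, h2 v]
    ring

lemma nonhalting_of_cycle {C : List V} (hs : ∀ u v, m u v = m v u) (hl : ∀ v, m v v = 0)
    (hC : mgLegal m f C) (hcyc : mgPlay m f C = f) (hpos : ∀ v, 0 < C.count v)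
    (hV : Nonempty V) :
    ¬ ∃ L : List V, mgLegal m f L ∧ ∀ w, mgPlay m f L w < (mgDeg m w : ℤ) := by
  rintro ⟨L, hleg, hstab⟩
  obtain ⟨Lk, h1, h2⟩ := legal_pow hC hcyc (L.length + 1)
  obtain ⟨v⟩ := hV
  have h3 := halting_count_bound hs hl Lk f L h1 hleg hstab v
  have h4 := List.count_le_length (a := v) (l := L)
  have h5 := hpos v
  rw [h2 v] at h3
  nlinarith

end D

section E
variable {m : V → V → ℕ} {f : V → ℤ}

lemma play_univ_once (hs : ∀ u v, m u v = m v u) (hl : ∀ v, m v v = 0)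
    {W : List V} (hnd : W.Nodup) (hcomp : ∀ v : V, v ∈ W) :
    mgPlay m f W = f := by
  funext v
  rw [mgPlay_val hs hl]
  have hc : ∀ u, W.count u = 1 := fun u => List.count_eq_one_of_mem hnd (hcomp u)
  have : ∑ u, (m u v : ℤ) * W.count u = (mgDeg m v : ℤ) := by
    rw [← sum_col hs v]
    exact Finset.sum_congr rfl fun u _ => by rw [hc u]; ring
  rw [this, hc v]
  ring

lemma legal_of_big : ∀ (X : List V) (f : V → ℤ), X.Nodup →
    (∀ v ∈ X, (mgDeg m v : ℤ) ≤ f v) → mgLegal m f X := by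
  intro X
  induction X with
  | nil => intro f _ _; trivial
  | cons a T ih =>
    intro f hnd hbig
    refine ⟨hbig a (List.mem_cons_self), ih _ (List.nodup_cons.1 hnd).2 fun v hv => ?_⟩
    have hva : v ≠ a := by
      intro hh; subst hh; exact (List.nodup_cons.1 hnd).1 hv
    have : mgFire m f a v = f v + m a v := by simp [mgFire, hva]
    rw [this]
    have h0 : (0:ℤ) ≤ m a v := by positivity
    have := hbig v (List.mem_cons_of_mem _ hv)
    linarith

lemma exists_good_order (hs : ∀ u v, m u v = m v u) (hl : ∀ v, m v v = 0)
    (hconn : mgConnected m) {h : V → ℤ} {L : List V} (hne : L ≠ [])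
    (hleg : mgLegal m h L) (hcyc : mgPlay m h L = h) :
    ∃ W : List V, W.Nodup ∧ (∀ v : V, v ∈ W) ∧ mgLegal m h W := by
  have hpos := count_pos_of_cycle hs hl hconn hne hcyc
  have hmemL : ∀ v : V, v ∈ L := fun v => List.count_pos_iff.1 (hpos v)
  have hndW : (L.dedup).Nodup := List.nodup_dedup L
  have hcompW : ∀ v : V, v ∈ L.dedup := fun v => List.mem_dedup.2 (hmemL v)
  refine ⟨L.dedup, hndW, hcompW, ?_⟩
  apply legal_of_cond _ _ hndW
  intro P v Q hPQ
  obtain ⟨A, B, hAB, hvB⟩ := exists_lastocc (hmemL v)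
  have hbound : ∑ u, (m u v : ℤ) * B.count u ≤ h v := by
    rw [hAB] at hleg hcyc
    exact cycle_bound hs hl hleg hcyc hvB
  have hQB : ∀ u ∈ Q, u ∈ B := fun u hu => dedup_lastocc L P Q v u hPQ hu A B hAB hvB
  have hndQ : Q.Nodup := by
    rw [hPQ] at hndW
    exact ((List.nodup_append.1 hndW).2.1).of_cons
  -- the full sum over the dedup list
  have hsplit : (mgDeg m v : ℤ) = ((P.map fun u => (m u v : ℤ)).sum)
      + ((Q.map fun u => (m u v : ℤ)).sum) := by
    have h1 : (mgDeg m v : ℤ) = ∑ u, (m u v : ℤ) := (sum_col hs v).symm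
    have h2 : ∑ u, (m u v : ℤ) = ((L.dedup).map fun u => (m u v : ℤ)).sum := by
      rw [← List.sum_toFinset _ hndW]
      apply Finset.sum_congr _ fun u _ => rfl
      ext u
      simp [hcompW u, List.mem_toFinset]
    rw [h1, h2, hPQ]
    rw [List.map_append, List.sum_append, List.map_cons, List.sum_cons]
    push_cast [hl v]
    ring
  -- compare Q-sum with the B-count sum
  have hQle : ((Q.map fun u => (m u v : ℤ)).sum) ≤ ∑ u, (m u v : ℤ) * B.count u := by
    rw [← List.sum_toFinset _ hndQ]
    calc (Q.toFinset).sum (fun u => (m u v : ℤ))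
        ≤ (Q.toFinset).sum (fun u => (m u v : ℤ) * B.count u) := by
          apply Finset.sum_le_sum
          intro u hu
          have hb : 1 ≤ B.count u :=
            List.count_pos_iff.2 (hQB u (List.mem_toFinset.1 hu))
          have hb' : (1:ℤ) ≤ B.count u := by exact_mod_cast hb
          nlinarith [Int.ofNat_nonneg (m u v)]
      _ ≤ ∑ u, (m u v : ℤ) * B.count u := by
          apply Finset.sum_le_sum_of_subset_of_nonneg (Finset.subset_univ _)
          intro u _ _
          positivity
  linarith

end E

section F
variable {m : V → V → ℕ} {M : ℕ}

lemma apexM_symm (hs : ∀ u v, m u v = m v u) :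
    ∀ o o' : Option V, apexM m M o o' = apexM m M o' o := by
  intro o o'
  cases o <;> cases o' <;> simp [apexM] <;> apply hs

lemma apexM_loop (hl : ∀ v, m v v = 0) : ∀ o : Option V, apexM m M o o = 0 := by
  intro o; cases o <;> simp [apexM] <;> apply hl

lemma apex_deg_some (v : V) : (mgDeg (apexM m M) (some v) : ℤ) = (mgDeg m v : ℤ) + M := by
  rw [mgDeg, mgDeg]
  push_cast
  rw [Fintype.sum_option (fun o => ((apexM m M (some v) o : ℤ)))]
  simp [apexM]
  ring

lemma apex_deg_none : (mgDeg (apexM m M) (none : Option V) : ℤ) = (Fintype.card V) * M := by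
  rw [mgDeg]
  push_cast
  rw [Fintype.sum_option (fun o => ((apexM m M none o : ℤ)))]
  have h1 : (apexM m M none none : ℤ) = 0 := rfl
  have h2 : ∀ v : V, (apexM m M none (some v) : ℤ) = M := fun v => rfl
  rw [h1, Finset.sum_congr rfl fun v _ => h2 v, Finset.sum_const, Finset.card_univ]
  push_cast
  ring

lemma legal_lift : ∀ (X : List V) (f : V → ℤ) (F : Option V → ℤ), X.Nodup →
    (∀ v ∈ X, F (some v) = f v + M) → mgLegal m f X →
    mgLegal (apexM m M) F (X.map some) := by
  intro X
  induction X with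
  | nil => intro f F _ _ _; trivial
  | cons a T ih =>
    intro f F hnd hlift hleg
    rw [List.map_cons]
    refine ⟨?_, ?_⟩
    · rw [hlift a (List.mem_cons_self), apex_deg_some]
      have := hleg.1
      linarith
    · refine ih (mgFire m f a) (mgFire (apexM m M) F (some a)) (List.nodup_cons.1 hnd).2
        (fun v hv => ?_) hleg.2
      have hva : v ≠ a := by
        intro hh; subst hh; exact (List.nodup_cons.1 hnd).1 hv
      have h1 : mgFire (apexM m M) F (some a) (some v) = F (some v) + m a v := by
        simp [mgFire, apexM, hva]
      have h2 : mgFire m f a v = f v + m a v := by simp [mgFire, hva]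
      rw [h1, h2, hlift v (List.mem_cons_of_mem _ hv)]
      ring

lemma play_lift_none : ∀ (X : List V) (F : Option V → ℤ),
    mgPlay (apexM m M) F (X.map some) none = F none + (X.length : ℤ) * M := by
  intro X
  induction X with
  | nil => intro F; simp [mgPlay]
  | cons a T ih =>
    intro F
    rw [List.map_cons, mgPlay_cons, ih]
    have h1 : mgFire (apexM m M) F (some a) none = F none + M := by
      simp [mgFire, apexM]
    rw [h1, List.length_cons]
    push_cast
    ring

end F


/-- `dist_rec_G(f) ≥ dist_nonhalt_{G'}(f')` for the apex construction. -/
theorem stmt13 [Nonempty V] (m : V → V → ℕ) (hsymm : ∀ u v, m u v = m v u)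
    (hloop : ∀ v, m v v = 0) (hconn : mgConnected m) (f : V → ℤ) (M : ℕ)
    (hMpos : 0 < M)
    (hM : (mgDistRec m f : ℤ) +
        max 0 (Finset.univ.sup' Finset.univ_nonempty (fun v => f v - (mgDeg m v : ℤ)))
      < (M : ℤ)) :
    mgDistNonhalt (apexM m M) (apexF f M) ≤ mgDistRec m f := by
  classical
  -- Step 1: the recurrent-distance set is nonempty
  have hSne : {n : ℕ | ∃ g : V → ℤ, mgEffective g ∧ mgDegDiv g = (n : ℤ) ∧
      mgRecurrent m (f + g)}.Nonempty := by
    set g1 : V → ℤ := fun v => max ((mgDeg m v : ℤ) - f v) 0 with hg1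
    have hg1eff : mgEffective g1 := fun v => le_max_right _ _
    have hg1deg : (0:ℤ) ≤ mgDegDiv g1 := Finset.sum_nonneg fun v _ => le_max_right _ _
    refine ⟨(mgDegDiv g1).toNat, g1, hg1eff, (Int.toNat_of_nonneg hg1deg).symm, ?_⟩
    have hW0 : (Finset.univ : Finset V).toList ≠ [] := by
      intro hh
      have h0 : (Finset.univ : Finset V).toList.length = 0 := by rw [hh]; rfl
      rw [Finset.length_toList] at h0
      exact absurd h0 (Finset.card_ne_zero_of_mem (Finset.mem_univ (Classical.arbitrary V)))
    have hnd := Finset.nodup_toList (Finset.univ : Finset V)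
    have hcomp : ∀ v : V, v ∈ (Finset.univ : Finset V).toList :=
      fun v => (Finset.mem_toList).2 (Finset.mem_univ v)
    have hbig : ∀ v ∈ (Finset.univ : Finset V).toList, (mgDeg m v : ℤ) ≤ (f + g1) v := by
      intro v _
      have h1 : (f + g1) v = f v + max ((mgDeg m v : ℤ) - f v) 0 := rfl
      rw [h1]
      have h2 := le_max_left ((mgDeg m v : ℤ) - f v) 0
      linarith
    exact ⟨_, hW0, legal_of_big _ _ hnd hbig, play_univ_once hsymm hloop hnd hcomp⟩
  -- Step 2: extract an optimal effective divisor g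
  have hmem : mgDistRec m f ∈ {n : ℕ | ∃ g : V → ℤ, mgEffective g ∧ mgDegDiv g = (n : ℤ) ∧
      mgRecurrent m (f + g)} := Nat.sInf_mem hSne
  obtain ⟨g, hgeff, hgdeg, hgrec⟩ := hmem
  obtain ⟨L, hLne, hLleg, hLcyc⟩ := hgrec
  obtain ⟨W, hWnd, hWcomp, hWleg⟩ := exists_good_order hsymm hloop hconn hLne hLleg hLcyc
  -- Step 3: lift to the apex graph
  set g' : Option V → ℤ := fun o => Option.elim o 0 g with hg'
  have hg'eff : mgEffective g' := by
    intro o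
    cases o
    · exact le_refl 0
    · exact hgeff _
  have hg'deg : mgDegDiv g' = ((mgDistRec m f : ℕ) : ℤ) := by
    rw [mgDegDiv, Fintype.sum_option g', ← hgdeg, mgDegDiv]
    have h0 : g' none = 0 := rfl
    rw [h0, zero_add]
    exact Finset.sum_congr rfl fun v _ => rfl
  set F : Option V → ℤ := apexF f M + g' with hF
  have hFsome : ∀ v, F (some v) = (f + g) v + (M : ℤ) := by
    intro v
    show apexF f M (some v) + g' (some v) = _
    show f v + (M:ℤ) + g v = _
    show _ = f v + g v + (M:ℤ)
    ring
  have hFnone : F none = 0 := by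
    show apexF f M none + g' none = 0
    rfl
  set C : List (Option V) := W.map some ++ [none] with hC
  have hCnd : C.Nodup := by
    rw [hC, List.nodup_append]
    refine ⟨List.Nodup.map (Option.some_injective V) hWnd, List.nodup_singleton _, ?_⟩
    intro a ha b hb
    have h1 : b = none := by simpa using hb
    subst h1
    intro h; subst h
    simp at ha
  have hCcomp : ∀ o : Option V, o ∈ C := by
    intro o
    cases o with
    | none => exact List.mem_append_right _ (List.mem_singleton_self _)
    | some v => exact List.mem_append_left _ (List.mem_map_of_mem (f := some) (hWcomp v))
  have hCleg : mgLegal (apexM m M) F C := by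
    apply mgLegal_append_intro
    · exact legal_lift W (f + g) F hWnd (fun v _ => hFsome v) hWleg
    · refine ⟨?_, trivial⟩
      rw [play_lift_none, hFnone, apex_deg_none]
      have hlen : (W.length : ℤ) = (Fintype.card V : ℤ) := by
        have h1 : W.toFinset = (Finset.univ : Finset V) :=
          Finset.eq_univ_iff_forall.2 fun v => List.mem_toFinset.2 (hWcomp v)
        have h2 : W.toFinset.card = W.length := List.toFinset_card_of_nodup hWnd
        rw [← Finset.card_univ, ← h1, h2]
      rw [hlen]
      linarith
  have hCcyc : mgPlay (apexM m M) F C = F :=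
    play_univ_once (apexM_symm hsymm) (apexM_loop hloop) hCnd hCcomp
  have hCpos : ∀ o : Option V, 0 < @List.count (Option V) instBEqOfDecidableEq o C :=
    fun o => count_pos_of_mem' (hCcomp o)
  have hnh : ¬ mgHalting (apexM m M) F := by
    intro hh
    obtain ⟨L0, h1, h2⟩ := hh
    exact nonhalting_of_cycle (apexM_symm hsymm) (apexM_loop hloop) hCleg hCcyc hCpos
      ⟨none⟩ ⟨L0, h1, h2⟩
  have hfin : mgDistRec m f ∈ {n : ℕ | ∃ g : Option V → ℤ, mgEffective g ∧
      mgDegDiv g = (n : ℤ) ∧ ¬ mgHalting (apexM m M) (apexF f M + g)} :=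
    ⟨g', hg'eff, hg'deg, hnh⟩
  exact Nat.sInf_le hfin
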